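/- Let (A, μ, α) be a Hom-algebra over a field k of characteristic 0 and let k ≥ 2 be an integer. For λ ∈ k define A(λ) = (A, μ_λ, α) where μ_λ(x,y) = λ·xy + (1−λ)·yx. Then: (1) A is up to k-th Hom-power associative if and only if A(λ) is up to k-th Hom-power associative for all λ ∈ k; (2) if A is up to k-th Hom-power associative, then for each l ∈ {1,...,k} the l-th Hom-power of every x in A coincides with its l-th Hom-power in A(λ). -/

import Mathlib

variable {k A : Type*} [Field k] [CharZero k] [AddCommGroup A] [Module k A]

/-- The `n`-th Hom-power: `x^1 = x`, `x^n = x^{n-1} · α^{n-2}(x)`. -/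
def homPow (μ : A →ₗ[k] A →ₗ[k] A) (α : A →ₗ[k] A) (x : A) : ℕ → A
  | 0 => x
  | 1 => x
  | n + 2 => μ (homPow μ α x (n + 1)) ((α ^ n) x)

/-- `A` is `n`-th Hom-power associative. -/
def IsNthHomPowerAssoc (μ : A →ₗ[k] A →ₗ[k] A) (α : A →ₗ[k] A) (n : ℕ) : Prop :=
  ∀ (x : A) (i : ℕ), 1 ≤ i → i ≤ n - 1 →
    homPow μ α x n =
      μ ((α ^ (n - i - 1)) (homPow μ α x i)) ((α ^ (i - 1)) (homPow μ α x (n - i)))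

/-- `A` is Hom-power associative. -/
def IsHomPowerAssoc (μ : A →ₗ[k] A →ₗ[k] A) (α : A →ₗ[k] A) : Prop :=
  ∀ n : ℕ, 2 ≤ n → IsNthHomPowerAssoc μ α n

/-- `A` is up to `n`-th Hom-power associative. -/
def IsUpToNthHomPowerAssoc (μ : A →ₗ[k] A →ₗ[k] A) (α : A →ₗ[k] A) (n : ℕ) : Prop :=
  ∀ m : ℕ, 2 ≤ m → m ≤ n → IsNthHomPowerAssoc μ α m

/-- The Hom-algebra `(A, μ, α)` is multiplicative. -/
def IsMultiplicative (μ : A →ₗ[k] A →ₗ[k] A) (α : A →ₗ[k] A) : Prop :=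
  ∀ x y : A, α (μ x y) = μ (α x) (α y)


/-- Theorem: for `K ≥ 2`, (1) `A` is up to `K`-th Hom-power associative iff
`A(λ) = (A, λμ + (1-λ)μᵒᵖ, α)` is up to `K`-th Hom-power associative for all `λ ∈ k`;
(2) if `A` is up to `K`-th Hom-power associative then the `l`-th Hom-powers in `A` and
`A(λ)` coincide for `1 ≤ l ≤ K`. -/
theorem stmt3 (μ : A →ₗ[k] A →ₗ[k] A) (α : A →ₗ[k] A) (K : ℕ) (hK : 2 ≤ K) :
    (IsUpToNthHomPowerAssoc μ α K ↔
      ∀ lam : k, IsUpToNthHomPowerAssoc (lam • μ + (1 - lam) • μ.flip) α K) ∧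
    (IsUpToNthHomPowerAssoc μ α K →
      ∀ (lam : k) (x : A) (l : ℕ), 1 ≤ l → l ≤ K →
        homPow (lam • μ + (1 - lam) • μ.flip) α x l = homPow μ α x l) := by

  have key : IsUpToNthHomPowerAssoc μ α K → ∀ (lam : k) (x : A) (l : ℕ), 1 ≤ l → l ≤ K →
      homPow (lam • μ + (1 - lam) • μ.flip) α x l = homPow μ α x l := by
    intro H lam x l
    induction l with
    | zero => intro h; omega
    | succ n ih =>
      intro _ hle
      match n, ih with
      | 0, _ => rfl
      | m + 1, ih =>
        have h1 : homPow (lam • μ + (1 - lam) • μ.flip) α x (m + 2)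
            = (lam • μ + (1 - lam) • μ.flip)
              (homPow (lam • μ + (1 - lam) • μ.flip) α x (m + 1)) ((α ^ m) x) := rfl
        rw [h1, ih (by omega) (by omega)]
        have hassoc := H (m + 2) (by omega) hle x 1 (by omega) (by omega)
        simp only [show m + 2 - 1 - 1 = m from by omega, show m + 2 - 1 = m + 1 from by omega,
          show m + 1 - 1 = m from by omega,
          show (1 : ℕ) - 1 = 0 from rfl, pow_zero, Module.End.one_apply] at hassoc
        have hdef : μ (homPow μ α x (m + 1)) ((α ^ m) x) = homPow μ α x (m + 2) := rfl
        have hpow1 : homPow μ α x 1 = x := rfl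
        rw [hpow1] at hassoc
        simp only [LinearMap.add_apply, LinearMap.smul_apply, LinearMap.flip_apply, hdef,
          ← hassoc]
        module
  have fwd : IsUpToNthHomPowerAssoc μ α K →
      ∀ lam : k, IsUpToNthHomPowerAssoc (lam • μ + (1 - lam) • μ.flip) α K := by
    intro H lam m hm2 hmK x i hi1 him
    rw [key H lam x m (by omega) hmK, key H lam x i (by omega) (by omega),
      key H lam x (m - i) (by omega) (by omega)]
    simp only [LinearMap.add_apply, LinearMap.smul_apply, LinearMap.flip_apply]
    have h1 := H m hm2 hmK x i hi1 him
    have h2 := H m hm2 hmK x (m - i) (by omega) (by omega)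
    rw [show m - (m - i) = i from by omega] at h2
    rw [← h1, ← h2]
    module
  refine ⟨⟨fwd, fun h => ?_⟩, key⟩
  have := h 1
  simpa using this
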